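/- Let H and K be ultrametric normed spaces over a nonarchimedean normed field. Define on the algebraic tensor product H ⊗ K the quantity ‖u‖_π := inf { max_{1≤i≤n} ‖xᵢ‖·‖yᵢ‖ : u = Σᵢ₌₁ⁿ xᵢ ⊗ yᵢ }. Then ‖·‖_π is an ultrametric seminorm: it is absolutely homogeneous (‖λu‖_π = |λ|·‖u‖_π) and satisfies ‖u + v‖_π ≤ max(‖u‖_π, ‖v‖_π). -/

import Mathlib

open scoped TensorProduct Pointwise

/-- The ultrametric projective seminorm on the algebraic tensor product of two
normed spaces over a nonarchimedean normed field:
`‖u‖_π = inf { maxᵢ ‖xᵢ‖·‖yᵢ‖ : u = Σᵢ xᵢ ⊗ yᵢ }`. -/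
noncomputable def projNorm {F H K : Type*} [NormedField F]
    [NormedAddCommGroup H] [NormedSpace F H]
    [NormedAddCommGroup K] [NormedSpace F K] (u : H ⊗[F] K) : ℝ :=
  sInf {r : ℝ | ∃ (n : ℕ) (x : Fin n → H) (y : Fin n → K),
    u = ∑ i, x i ⊗ₜ[F] y i ∧ r = ⨆ i, ‖x i‖ * ‖y i‖}

namespace ProjNormAux

variable {F H K : Type*} [NormedField F]
    [NormedAddCommGroup H] [NormedSpace F H]
    [NormedAddCommGroup K] [NormedSpace F K]

/-- The representation set. -/
def S (u : H ⊗[F] K) : Set ℝ :=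
  {r : ℝ | ∃ (n : ℕ) (x : Fin n → H) (y : Fin n → K),
    u = ∑ i, x i ⊗ₜ[F] y i ∧ r = ⨆ i, ‖x i‖ * ‖y i‖}

lemma projNorm_eq (u : H ⊗[F] K) : projNorm u = sInf (S u) := rfl

lemma nonneg_of_mem {u : H ⊗[F] K} {r : ℝ} (h : r ∈ S u) : 0 ≤ r := by
  obtain ⟨n, x, y, -, rfl⟩ := h
  exact Real.iSup_nonneg fun i => mul_nonneg (norm_nonneg _) (norm_nonneg _)

lemma bddBelow_S (u : H ⊗[F] K) : BddBelow (S u) :=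
  ⟨0, fun r h => nonneg_of_mem h⟩

lemma sum_append {n m : ℕ} (x : Fin n → H) (y : Fin n → K)
    (x' : Fin m → H) (y' : Fin m → K) :
    (∑ i, x i ⊗ₜ[F] y i) + (∑ i, x' i ⊗ₜ[F] y' i) =
      ∑ i, Fin.append x x' i ⊗ₜ[F] Fin.append y y' i := by
  rw [Fin.sum_univ_add]
  simp [Fin.append_left, Fin.append_right]

lemma iSup_append {n m : ℕ} (f : Fin n → ℝ) (g : Fin m → ℝ)
    (hf : ∀ i, 0 ≤ f i) (hg : ∀ i, 0 ≤ g i) :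
    (⨆ i, Fin.append f g i) = max (⨆ i, f i) (⨆ i, g i) := by
  apply le_antisymm
  · refine Real.iSup_le (fun i => ?_)
      (le_max_of_le_left (Real.iSup_nonneg hf))
    refine Fin.addCases (fun j => ?_) (fun j => ?_) i
    · rw [Fin.append_left]
      exact le_max_of_le_left (le_ciSup (Finite.bddAbove_range f) j)
    · rw [Fin.append_right]
      exact le_max_of_le_right (le_ciSup (Finite.bddAbove_range g) j)
  · have hnn : (0:ℝ) ≤ ⨆ i, Fin.append f g i := by
      refine Real.iSup_nonneg fun i => ?_
      refine Fin.addCases (fun j => ?_) (fun j => ?_) i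
      · rw [Fin.append_left]; exact hf j
      · rw [Fin.append_right]; exact hg j
    refine max_le ?_ ?_
    · refine Real.iSup_le (fun j => ?_) hnn
      calc f j = Fin.append f g (Fin.castAdd m j) := (Fin.append_left f g j).symm
        _ ≤ _ := le_ciSup (Finite.bddAbove_range _) _
    · refine Real.iSup_le (fun j => ?_) hnn
      calc g j = Fin.append f g (Fin.natAdd n j) := (Fin.append_right f g j).symm
        _ ≤ _ := le_ciSup (Finite.bddAbove_range _) _

lemma nonempty_S (u : H ⊗[F] K) : (S u).Nonempty := by
  suffices h : ∃ (n : ℕ) (x : Fin n → H) (y : Fin n → K), u = ∑ i, x i ⊗ₜ[F] y i by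
    obtain ⟨n, x, y, h⟩ := h
    exact ⟨_, n, x, y, h, rfl⟩
  induction u with
  | zero => exact ⟨0, ![], ![], by simp⟩
  | tmul a b => exact ⟨1, ![a], ![b], by simp⟩
  | add u v hu hv =>
    obtain ⟨n, x, y, hu⟩ := hu
    obtain ⟨m, x', y', hv⟩ := hv
    exact ⟨n + m, Fin.append x x', Fin.append y y', by rw [hu, hv, sum_append]⟩

lemma mem_S_add {u v : H ⊗[F] K} {r s : ℝ} (hr : r ∈ S u) (hs : s ∈ S v) :
    max r s ∈ S (u + v) := by
  obtain ⟨n, x, y, hu, rfl⟩ := hr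
  obtain ⟨m, x', y', hv, rfl⟩ := hs
  refine ⟨n + m, Fin.append x x', Fin.append y y', by rw [hu, hv, sum_append], ?_⟩
  rw [← iSup_append (fun i => ‖x i‖ * ‖y i‖) (fun i => ‖x' i‖ * ‖y' i‖)
    (fun i => mul_nonneg (norm_nonneg _) (norm_nonneg _))
    (fun i => mul_nonneg (norm_nonneg _) (norm_nonneg _))]
  refine iSup_congr fun i => ?_
  refine Fin.addCases (fun j => ?_) (fun j => ?_) i <;>
    simp [Fin.append_left, Fin.append_right]

lemma smul_mem_S {u : H ⊗[F] K} {r : ℝ} (hr : r ∈ S u) (c : F) :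
    ‖c‖ * r ∈ S (c • u) := by
  obtain ⟨n, x, y, hu, rfl⟩ := hr
  refine ⟨n, fun i => c • x i, y, ?_, ?_⟩
  · rw [hu, Finset.smul_sum]
    simp [TensorProduct.smul_tmul']
  · rw [Real.mul_iSup_of_nonneg (norm_nonneg c)]
    refine iSup_congr fun i => ?_
    rw [norm_smul, mul_assoc]

lemma S_smul (c : F) (hc : c ≠ 0) (u : H ⊗[F] K) :
    S (c • u) = (fun r => ‖c‖ * r) '' S u := by
  ext r
  constructor
  · intro hr
    have h := smul_mem_S hr c⁻¹
    rw [inv_smul_smul₀ hc] at h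
    refine ⟨‖c⁻¹‖ * r, h, ?_⟩
    show ‖c‖ * (‖c⁻¹‖ * r) = r
    rw [← mul_assoc, norm_inv, mul_inv_cancel₀ (norm_ne_zero_iff.2 hc), one_mul]
  · rintro ⟨s, hs, rfl⟩
    exact smul_mem_S hs c

lemma projNorm_zero : projNorm (0 : H ⊗[F] K) = 0 := by
  rw [projNorm_eq]
  refine le_antisymm (csInf_le (bddBelow_S 0) ?_)
    (le_csInf (nonempty_S 0) fun r hr => nonneg_of_mem hr)
  exact ⟨0, ![], ![], by simp, by simp⟩

end ProjNormAux

/-- For ultrametric normed spaces `H`, `K` over a nonarchimedean normed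
field `F`, the quantity `‖·‖_π` is an ultrametric seminorm on `H ⊗ K`: it is absolutely
homogeneous and satisfies the strong triangle inequality. -/
theorem projNorm_is_ultrametric_seminorm
    {F H K : Type*} [NormedField F] [IsUltrametricDist F]
    [NormedAddCommGroup H] [NormedSpace F H] [IsUltrametricDist H]
    [NormedAddCommGroup K] [NormedSpace F K] [IsUltrametricDist K] :
    (∀ (c : F) (u : H ⊗[F] K), projNorm (c • u) = ‖c‖ * projNorm u) ∧
    (∀ u v : H ⊗[F] K, projNorm (u + v) ≤ max (projNorm u) (projNorm v)) := by
  open ProjNormAux in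
  constructor
  · intro c u
    rcases eq_or_ne c 0 with rfl | hc
    · simp [ProjNormAux.projNorm_zero]
    · rw [ProjNormAux.projNorm_eq, ProjNormAux.projNorm_eq,
        ProjNormAux.S_smul c hc u]
      have : (fun r => ‖c‖ * r) '' ProjNormAux.S u = ‖c‖ • ProjNormAux.S u := by
        ext r; simp [Set.mem_smul_set, smul_eq_mul]
      rw [this, Real.sInf_smul_of_nonneg (norm_nonneg c), smul_eq_mul]
  · intro u v
    refine le_of_forall_pos_le_add fun ε hε => ?_
    obtain ⟨r, hr, hrlt⟩ := exists_lt_of_csInf_lt (ProjNormAux.nonempty_S u)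
      (lt_add_of_pos_right (sInf (ProjNormAux.S u)) hε)
    obtain ⟨s, hs, hslt⟩ := exists_lt_of_csInf_lt (ProjNormAux.nonempty_S v)
      (lt_add_of_pos_right (sInf (ProjNormAux.S v)) hε)
    calc projNorm (u + v) ≤ max r s :=
          csInf_le (ProjNormAux.bddBelow_S _) (ProjNormAux.mem_S_add hr hs)
      _ ≤ max (projNorm u) (projNorm v) + ε := by
          rw [ProjNormAux.projNorm_eq u, ProjNormAux.projNorm_eq v]
          rcases max_cases r s with ⟨h, -⟩ | ⟨h, -⟩ <;> rw [h]
          · exact le_trans hrlt.le (add_le_add_left (le_max_left _ _) ε)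
          · exact le_trans hslt.le (add_le_add_left (le_max_right _ _) ε)
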